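/- arXiv:2201.09093 — 2 statements merged into one kernel-verified Lean document; each statement's English description precedes it below -/
import Mathlib

section
/- For integers n, m ≥ 3, λ_2(↔C_n □ ↔C_m) = 4, where ↔C_n is the complete biorientation of the cycle on n vertices. -/
/-- The set of arcs of a digraph. -/
def Digraph.ArcSet {V : Type*} (D : Digraph V) : Set (V × V) := {p | D.Adj p.1 p.2}

/-- Delete a set of arcs from a digraph. -/
def Digraph.DeleteArcs {V : Type*} (D : Digraph V) (F : Set (V × V)) : Digraph V :=
  ⟨fun u v => D.Adj u v ∧ (u, v) ∉ F⟩

/-- A digraph is strong if every vertex can reach every other vertex by a directed walk. -/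
def Digraph.IsStrong {V : Type*} (D : Digraph V) : Prop :=
  ∀ u v : V, Relation.ReflTransGen D.Adj u v

/-- The arc-strong connectivity: the minimum number of arcs whose removal
destroys strong connectivity. -/
noncomputable def Digraph.arcConn {V : Type*} (D : Digraph V) : ℕ :=
  sInf {k | ∃ F : Set (V × V), F ⊆ D.ArcSet ∧ F.ncard = k ∧ ¬ (D.DeleteArcs F).IsStrong}

noncomputable def Digraph.outDeg {V : Type*} (D : Digraph V) (v : V) : ℕ :=
  {w | D.Adj v w}.ncard

noncomputable def Digraph.inDeg {V : Type*} (D : Digraph V) (v : V) : ℕ :=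
  {w | D.Adj w v}.ncard

/-- Minimum out-degree. -/
noncomputable def Digraph.minOutDeg {V : Type*} (D : Digraph V) : ℕ := ⨅ v, D.outDeg v

/-- Minimum in-degree. -/
noncomputable def Digraph.minInDeg {V : Type*} (D : Digraph V) : ℕ := ⨅ v, D.inDeg v

/-- Cartesian product of digraphs. -/
def Digraph.cartProd {V W : Type*} (G : Digraph V) (H : Digraph W) : Digraph (V × W) :=
  ⟨fun a b => (G.Adj a.1 b.1 ∧ a.2 = b.2) ∨ (a.1 = b.1 ∧ H.Adj a.2 b.2)⟩

/-- `B` is the arc set of an `S`-strong subgraph of `D`: the arcs of `B` are arcs of `D`,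
and the subgraph with vertex set `S` together with all endpoints of `B`, and arc set `B`,
is strongly connected. -/
def Digraph.IsStrongSubgraphOn {V : Type*} (D : Digraph V) (S : Set V) (B : Set (V × V)) :
    Prop :=
  B ⊆ D.ArcSet ∧
  ∀ u ∈ S ∪ {v | ∃ e ∈ B, v = e.1 ∨ v = e.2},
    ∀ w ∈ S ∪ {v | ∃ e ∈ B, v = e.1 ∨ v = e.2},
      Relation.ReflTransGen (fun a b => (a, b) ∈ B) u w

/-- `λ_S(D)`: the maximum number of pairwise arc-disjoint `S`-strong subgraphs of `D`. -/
noncomputable def Digraph.lambdaS {V : Type*} (D : Digraph V) (S : Set V) : ℕ :=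
  sSup {k | ∃ f : Fin k → Set (V × V),
    (∀ i, D.IsStrongSubgraphOn S (f i)) ∧
    ∀ i j, i ≠ j → Disjoint (f i) (f j)}

/-- `λ_k(D)`: the strong subgraph `k`-arc-connectivity. -/
noncomputable def Digraph.lambdaK {V : Type*} (D : Digraph V) (k : ℕ) : ℕ :=
  sInf {m | ∃ S : Set V, S.ncard = k ∧ D.lambdaS S = m}

/-- The complete biorientation of an undirected graph. -/
def SimpleGraph.biorient {V : Type*} (G : SimpleGraph V) : Digraph V := ⟨G.Adj⟩

/-- Edge-connectivity of an undirected graph: the minimum number of edges whose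
removal disconnects the graph. -/
noncomputable def SimpleGraph.edgeConn {V : Type*} (G : SimpleGraph V) : ℕ :=
  sInf {k | ∃ F : Set (Sym2 V), F ⊆ G.edgeSet ∧ F.ncard = k ∧ ¬ (G.deleteEdges F).Connected}

/-- The directed cycle on `n` vertices. -/
def dirCycle (n : ℕ) : Digraph (Fin n) :=
  ⟨fun i j => (j : ℕ) = ((i : ℕ) + 1) % n⟩

/-- The complete biorientation of the cycle on `n` vertices. -/
def biCycle (n : ℕ) : Digraph (Fin n) :=
  ⟨fun i j => (j : ℕ) = ((i : ℕ) + 1) % n ∨ (i : ℕ) = ((j : ℕ) + 1) % n⟩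

/-- The complete digraph on `n` vertices. -/
def completeDigraph (n : ℕ) : Digraph (Fin n) := ⟨fun i j => i ≠ j⟩


set_option linter.unusedSectionVars false

namespace Stmt18
open Relation
open scoped Fin.NatCast Fin.CommRing

lemma aux_mod {n : ℕ} (hn : 3 ≤ n) {a : ℕ} (k : ℕ) (ha : a < n) (hk1 : 1 ≤ k) (hk2 : k ≤ 2) :
    (a + k) % n ≠ a := by
  rcases Nat.lt_or_ge (a + k) n with h | h
  · rw [Nat.mod_eq_of_lt h]; omega
  · have h2 : (a + k) % n = a + k - n := by
      rw [Nat.mod_eq_sub_mod h, Nat.mod_eq_of_lt (by omega)]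
    omega

section
variable {n m : ℕ} [NeZero n] [NeZero m]

lemma val_add_one (hn : 3 ≤ n) (a : Fin n) : ((a + 1 : Fin n) : ℕ) = (a.val + 1) % n := by
  rw [Fin.val_add, Fin.val_one', Nat.mod_eq_of_lt (show 1 < n by omega)]

lemma add_one_ne (hn : 3 ≤ n) (a : Fin n) : a + 1 ≠ a := by
  intro h
  have h' := congrArg Fin.val h
  rw [val_add_one hn] at h'
  exact aux_mod hn 1 a.isLt le_rfl (by omega) h'

lemma add_two_ne (hn : 3 ≤ n) (a : Fin n) : a + 1 + 1 ≠ a := by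
  intro h
  have h' := congrArg Fin.val h
  rw [val_add_one hn, val_add_one hn, Nat.mod_add_mod] at h'
  exact aux_mod hn 2 a.isLt (by omega) le_rfl h'

lemma fin_cycle_reach (i j : Fin n) :
    ReflTransGen (fun a b : Fin n => b = a + 1) i j := by
  have key : ∀ k : ℕ, ReflTransGen (fun a b : Fin n => b = a + 1) i (i + (k : Fin n)) := by
    intro k
    induction k with
    | zero => simpa using ReflTransGen.refl
    | succ k ih =>
      have h1 : ((k + 1 : ℕ) : Fin n) = (k : Fin n) + 1 := by push_cast; ring
      rw [h1, ← add_assoc]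
      exact ih.tail rfl
  have h := key (j - i).val
  rwa [Fin.cast_val_eq_self, show i + (j - i) = j by abel] at h

lemma fin_cycle_reach' (i j : Fin n) :
    ReflTransGen (fun a b : Fin n => a = b + 1) i j :=
  ReflTransGen.swap i j (fin_cycle_reach j i)

/-- Rightward arcs in row `r`. -/
def rowR (r : Fin m) : Set ((Fin n × Fin m) × (Fin n × Fin m)) :=
  {e | e.1.2 = r ∧ e.2.2 = r ∧ e.2.1 = e.1.1 + 1}

/-- Leftward arcs in row `r`. -/
def rowL (r : Fin m) : Set ((Fin n × Fin m) × (Fin n × Fin m)) :=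
  {e | e.1.2 = r ∧ e.2.2 = r ∧ e.1.1 = e.2.1 + 1}

/-- Upward arcs in column `c`. -/
def colU (c : Fin n) : Set ((Fin n × Fin m) × (Fin n × Fin m)) :=
  {e | e.1.1 = c ∧ e.2.1 = c ∧ e.2.2 = e.1.2 + 1}

/-- Downward arcs in column `c`. -/
def colD (c : Fin n) : Set ((Fin n × Fin m) × (Fin n × Fin m)) :=
  {e | e.1.1 = c ∧ e.2.1 = c ∧ e.1.2 = e.2.2 + 1}

def Lrow (r : Fin m) : Set (Fin n × Fin m) := {x | x.2 = r}
def Lcol (c : Fin n) : Set (Fin n × Fin m) := {x | x.1 = c}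

abbrev D2 (n m : ℕ) : Digraph (Fin n × Fin m) := (biCycle n).cartProd (biCycle m)

lemma rowR_arcs (hn : 3 ≤ n) (r : Fin m) : rowR (n := n) r ⊆ (D2 n m).ArcSet := by
  rintro ⟨⟨i, b⟩, ⟨j, d⟩⟩ ⟨h1, h2, h3⟩
  exact Or.inl ⟨Or.inl (by rw [show j = i + 1 from h3, val_add_one hn]),
    by dsimp only at h1 h2 ⊢; rw [h1, h2]⟩

lemma rowL_arcs (hn : 3 ≤ n) (r : Fin m) : rowL (n := n) r ⊆ (D2 n m).ArcSet := by
  rintro ⟨⟨i, b⟩, ⟨j, d⟩⟩ ⟨h1, h2, h3⟩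
  exact Or.inl ⟨Or.inr (by rw [show i = j + 1 from h3, val_add_one hn]),
    by dsimp only at h1 h2 ⊢; rw [h1, h2]⟩

lemma colU_arcs (hm : 3 ≤ m) (c : Fin n) : colU (m := m) c ⊆ (D2 n m).ArcSet := by
  rintro ⟨⟨i, b⟩, ⟨j, d⟩⟩ ⟨h1, h2, h3⟩
  exact Or.inr ⟨by dsimp only at h1 h2 ⊢; rw [h1, h2],
    Or.inl (by rw [show d = b + 1 from h3, val_add_one hm])⟩

lemma colD_arcs (hm : 3 ≤ m) (c : Fin n) : colD (m := m) c ⊆ (D2 n m).ArcSet := by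
  rintro ⟨⟨i, b⟩, ⟨j, d⟩⟩ ⟨h1, h2, h3⟩
  exact Or.inr ⟨by dsimp only at h1 h2 ⊢; rw [h1, h2],
    Or.inr (by rw [show b = d + 1 from h3, val_add_one hm])⟩

lemma rowR_end (r : Fin m) : ∀ e ∈ rowR (n := n) r, e.1 ∈ Lrow r ∧ e.2 ∈ Lrow r :=
  fun _ h => ⟨h.1, h.2.1⟩
lemma rowL_end (r : Fin m) : ∀ e ∈ rowL (n := n) r, e.1 ∈ Lrow r ∧ e.2 ∈ Lrow r :=
  fun _ h => ⟨h.1, h.2.1⟩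
lemma colU_end (c : Fin n) : ∀ e ∈ colU (m := m) c, e.1 ∈ Lcol c ∧ e.2 ∈ Lcol c :=
  fun _ h => ⟨h.1, h.2.1⟩
lemma colD_end (c : Fin n) : ∀ e ∈ colD (m := m) c, e.1 ∈ Lcol c ∧ e.2 ∈ Lcol c :=
  fun _ h => ⟨h.1, h.2.1⟩

lemma rowR_reach (r : Fin m) : ∀ x ∈ Lrow (n := n) r, ∀ y ∈ Lrow (n := n) r,
    ReflTransGen (fun a b => (a, b) ∈ rowR (n := n) r) x y := by
  intro x hx y hy
  rw [show x = (x.1, r) from Prod.ext rfl hx, show y = (y.1, r) from Prod.ext rfl hy]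
  exact ReflTransGen.lift (fun i => (i, r)) (r := fun a b : Fin n => b = a + 1) (fun a b h => ⟨rfl, rfl, h⟩) _ _
    (fin_cycle_reach x.1 y.1)

lemma rowL_reach (r : Fin m) : ∀ x ∈ Lrow (n := n) r, ∀ y ∈ Lrow (n := n) r,
    ReflTransGen (fun a b => (a, b) ∈ rowL (n := n) r) x y := by
  intro x hx y hy
  rw [show x = (x.1, r) from Prod.ext rfl hx, show y = (y.1, r) from Prod.ext rfl hy]
  exact ReflTransGen.lift (fun i => (i, r)) (r := fun a b : Fin n => a = b + 1) (fun a b h => ⟨rfl, rfl, h⟩) _ _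
    (fin_cycle_reach' x.1 y.1)

lemma colU_reach (c : Fin n) : ∀ x ∈ Lcol (m := m) c, ∀ y ∈ Lcol (m := m) c,
    ReflTransGen (fun a b => (a, b) ∈ colU (m := m) c) x y := by
  intro x hx y hy
  rw [show x = (c, x.2) from Prod.ext hx rfl, show y = (c, y.2) from Prod.ext hy rfl]
  exact ReflTransGen.lift (fun j => (c, j)) (r := fun a b : Fin m => b = a + 1) (fun a b h => ⟨rfl, rfl, h⟩) _ _
    (fin_cycle_reach x.2 y.2)

lemma colD_reach (c : Fin n) : ∀ x ∈ Lcol (m := m) c, ∀ y ∈ Lcol (m := m) c,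
    ReflTransGen (fun a b => (a, b) ∈ colD (m := m) c) x y := by
  intro x hx y hy
  rw [show x = (c, x.2) from Prod.ext hx rfl, show y = (c, y.2) from Prod.ext hy rfl]
  exact ReflTransGen.lift (fun j => (c, j)) (r := fun a b : Fin m => a = b + 1) (fun a b h => ⟨rfl, rfl, h⟩) _ _
    (fin_cycle_reach' x.2 y.2)

lemma union_reach {α : Type*} {A B : Set (α × α)} {LA LB : Set α}
    (hA : ∀ x ∈ LA, ∀ y ∈ LA, ReflTransGen (fun a b => (a, b) ∈ A) x y)
    (hB : ∀ x ∈ LB, ∀ y ∈ LB, ReflTransGen (fun a b => (a, b) ∈ B) x y)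
    {p : α} (hpA : p ∈ LA) (hpB : p ∈ LB) :
    ∀ x ∈ LA ∪ LB, ∀ y ∈ LA ∪ LB, ReflTransGen (fun a b => (a, b) ∈ A ∪ B) x y := by
  have mA : ∀ {x y : α}, ReflTransGen (fun a b => (a, b) ∈ A) x y →
      ReflTransGen (fun a b => (a, b) ∈ A ∪ B) x y :=
    fun h => ReflTransGen.mono (fun a b hab => Or.inl hab) _ _ h
  have mB : ∀ {x y : α}, ReflTransGen (fun a b => (a, b) ∈ B) x y →
      ReflTransGen (fun a b => (a, b) ∈ A ∪ B) x y :=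
    fun h => ReflTransGen.mono (fun a b hab => Or.inr hab) _ _ h
  intro x hx y hy
  have h1 : ReflTransGen (fun a b => (a, b) ∈ A ∪ B) x p := by
    rcases hx with h | h
    · exact mA (hA x h p hpA)
    · exact mB (hB x h p hpB)
  have h2 : ReflTransGen (fun a b => (a, b) ∈ A ∪ B) p y := by
    rcases hy with h | h
    · exact mA (hA p hpA y h)
    · exact mB (hB p hpB y h)
  exact h1.trans h2

lemma strong_of {α : Type*} {D : Digraph α} {S : Set α} {B : Set (α × α)} {L : Set α}
    (harc : B ⊆ D.ArcSet) (hS : S ⊆ L)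
    (hend : ∀ e ∈ B, e.1 ∈ L ∧ e.2 ∈ L)
    (hreach : ∀ x ∈ L, ∀ y ∈ L, ReflTransGen (fun a b => (a, b) ∈ B) x y) :
    D.IsStrongSubgraphOn S B := by
  refine ⟨harc, ?_⟩
  have hL : ∀ z, z ∈ S ∪ {v | ∃ e ∈ B, v = e.1 ∨ v = e.2} → z ∈ L := by
    rintro z (hz | ⟨e, he, hz | hz⟩)
    · exact hS hz
    · exact hz ▸ (hend e he).1
    · exact hz ▸ (hend e he).2
  intro u hu w hw
  exact hreach u (hL u hu) w (hL w hw)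

lemma strong2 {α : Type*} {D : Digraph α} {S : Set α} {A B : Set (α × α)} {LA LB : Set α}
    (harcA : A ⊆ D.ArcSet) (harcB : B ⊆ D.ArcSet)
    (hendA : ∀ e ∈ A, e.1 ∈ LA ∧ e.2 ∈ LA) (hendB : ∀ e ∈ B, e.1 ∈ LB ∧ e.2 ∈ LB)
    (hreachA : ∀ x ∈ LA, ∀ y ∈ LA, ReflTransGen (fun a b => (a, b) ∈ A) x y)
    (hreachB : ∀ x ∈ LB, ∀ y ∈ LB, ReflTransGen (fun a b => (a, b) ∈ B) x y)
    {p : α} (hpA : p ∈ LA) (hpB : p ∈ LB)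
    (hS : S ⊆ LA ∪ LB) :
    D.IsStrongSubgraphOn S (A ∪ B) := by
  refine strong_of (L := LA ∪ LB) (Set.union_subset harcA harcB) hS ?_ ?_
  · rintro e (he | he)
    · exact ⟨Or.inl (hendA e he).1, Or.inl (hendA e he).2⟩
    · exact ⟨Or.inr (hendB e he).1, Or.inr (hendB e he).2⟩
  · exact union_reach hreachA hreachB hpA hpB

lemma strong3 {α : Type*} {D : Digraph α} {S : Set α} {A B C : Set (α × α)} {LA LB LC : Set α}
    (harcA : A ⊆ D.ArcSet) (harcB : B ⊆ D.ArcSet) (harcC : C ⊆ D.ArcSet)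
    (hendA : ∀ e ∈ A, e.1 ∈ LA ∧ e.2 ∈ LA) (hendB : ∀ e ∈ B, e.1 ∈ LB ∧ e.2 ∈ LB)
    (hendC : ∀ e ∈ C, e.1 ∈ LC ∧ e.2 ∈ LC)
    (hreachA : ∀ x ∈ LA, ∀ y ∈ LA, ReflTransGen (fun a b => (a, b) ∈ A) x y)
    (hreachB : ∀ x ∈ LB, ∀ y ∈ LB, ReflTransGen (fun a b => (a, b) ∈ B) x y)
    (hreachC : ∀ x ∈ LC, ∀ y ∈ LC, ReflTransGen (fun a b => (a, b) ∈ C) x y)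
    {p q : α} (hpA : p ∈ LA) (hpB : p ∈ LB) (hqB : q ∈ LB) (hqC : q ∈ LC)
    (hS : S ⊆ (LA ∪ LB) ∪ LC) :
    D.IsStrongSubgraphOn S ((A ∪ B) ∪ C) := by
  refine strong_of (L := (LA ∪ LB) ∪ LC)
    (Set.union_subset (Set.union_subset harcA harcB) harcC) hS ?_ ?_
  · rintro e ((he | he) | he)
    · exact ⟨Or.inl (Or.inl (hendA e he).1), Or.inl (Or.inl (hendA e he).2)⟩
    · exact ⟨Or.inl (Or.inr (hendB e he).1), Or.inl (Or.inr (hendB e he).2)⟩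
    · exact ⟨Or.inr (hendC e he).1, Or.inr (hendC e he).2⟩
  · exact union_reach (union_reach hreachA hreachB hpA hpB) hreachC (Or.inr hqB) hqC

-- Disjointness atoms
lemma disj_rowR_rowL (hn : 3 ≤ n) (r r' : Fin m) :
    Disjoint (rowR (n := n) r) (rowL (n := n) r') := by
  rw [Set.disjoint_left]
  rintro ⟨⟨i, b⟩, ⟨j, d⟩⟩ ⟨_, _, h3⟩ ⟨_, _, h3'⟩
  dsimp only at h3 h3'
  rw [h3] at h3'
  exact add_two_ne hn i h3'.symm

lemma disj_rowR_rowR {r r' : Fin m} (hrr : r ≠ r') :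
    Disjoint (rowR (n := n) r) (rowR (n := n) r') := by
  rw [Set.disjoint_left]
  rintro e ⟨h1, _, _⟩ ⟨h1', _, _⟩
  exact hrr (h1.symm.trans h1')

lemma disj_rowL_rowL {r r' : Fin m} (hrr : r ≠ r') :
    Disjoint (rowL (n := n) r) (rowL (n := n) r') := by
  rw [Set.disjoint_left]
  rintro e ⟨h1, _, _⟩ ⟨h1', _, _⟩
  exact hrr (h1.symm.trans h1')

lemma disj_colU_colD (hm : 3 ≤ m) (c c' : Fin n) :
    Disjoint (colU (m := m) c) (colD (m := m) c') := by
  rw [Set.disjoint_left]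
  rintro ⟨⟨i, b⟩, ⟨j, d⟩⟩ ⟨_, _, h3⟩ ⟨_, _, h3'⟩
  dsimp only at h3 h3'
  rw [h3] at h3'
  exact add_two_ne hm b h3'.symm

lemma disj_colU_colU {c c' : Fin n} (hcc : c ≠ c') :
    Disjoint (colU (m := m) c) (colU (m := m) c') := by
  rw [Set.disjoint_left]
  rintro e ⟨h1, _, _⟩ ⟨h1', _, _⟩
  exact hcc (h1.symm.trans h1')

lemma disj_colD_colD {c c' : Fin n} (hcc : c ≠ c') :
    Disjoint (colD (m := m) c) (colD (m := m) c') := by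
  rw [Set.disjoint_left]
  rintro e ⟨h1, _, _⟩ ⟨h1', _, _⟩
  exact hcc (h1.symm.trans h1')

lemma disj_rowR_colU (hn : 3 ≤ n) (r : Fin m) (c : Fin n) :
    Disjoint (rowR (n := n) r) (colU (m := m) c) := by
  rw [Set.disjoint_left]
  rintro ⟨⟨i, b⟩, ⟨j, d⟩⟩ ⟨_, _, h3⟩ ⟨g1, g2, _⟩
  dsimp only at h3 g1 g2
  exact add_one_ne hn i (h3.symm.trans (g2.trans g1.symm))

lemma disj_rowR_colD (hn : 3 ≤ n) (r : Fin m) (c : Fin n) :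
    Disjoint (rowR (n := n) r) (colD (m := m) c) := by
  rw [Set.disjoint_left]
  rintro ⟨⟨i, b⟩, ⟨j, d⟩⟩ ⟨_, _, h3⟩ ⟨g1, g2, _⟩
  dsimp only at h3 g1 g2
  exact add_one_ne hn i (h3.symm.trans (g2.trans g1.symm))

lemma disj_rowL_colU (hn : 3 ≤ n) (r : Fin m) (c : Fin n) :
    Disjoint (rowL (n := n) r) (colU (m := m) c) := by
  rw [Set.disjoint_left]
  rintro ⟨⟨i, b⟩, ⟨j, d⟩⟩ ⟨_, _, h3⟩ ⟨g1, g2, _⟩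
  dsimp only at h3 g1 g2
  exact add_one_ne hn j (h3.symm.trans (g1.trans g2.symm))

lemma disj_rowL_colD (hn : 3 ≤ n) (r : Fin m) (c : Fin n) :
    Disjoint (rowL (n := n) r) (colD (m := m) c) := by
  rw [Set.disjoint_left]
  rintro ⟨⟨i, b⟩, ⟨j, d⟩⟩ ⟨_, _, h3⟩ ⟨g1, g2, _⟩
  dsimp only at h3 g1 g2
  exact add_one_ne hn j (h3.symm.trans (g1.trans g2.symm))

lemma pair_subset {α : Type*} {u v : α} {L : Set α} (hu : u ∈ L) (hv : v ∈ L) :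
    ({u, v} : Set α) ⊆ L := by
  rintro z (rfl | rfl) <;> assumption

lemma lambdaS_four (hn : 3 ≤ n) (hm : 3 ≤ m) (u v : Fin n × Fin m) (huv : u ≠ v) :
    ∃ f : Fin 4 → Set ((Fin n × Fin m) × (Fin n × Fin m)),
      (∀ i, (D2 n m).IsStrongSubgraphOn {u, v} (f i)) ∧
      ∀ i j, i ≠ j → Disjoint (f i) (f j) := by
  by_cases hb : u.2 = v.2
  · -- same row
    have ha : u.1 ≠ v.1 := fun h => huv (Prod.ext h hb)
    set r' : Fin m := u.2 + 1 with hr'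
    have hrne : u.2 ≠ r' := (add_one_ne hm u.2).symm
    refine ⟨![rowR u.2, rowL u.2,
        (colU u.1 ∪ rowR r') ∪ colD v.1,
        (colD u.1 ∪ rowL r') ∪ colU v.1], ?_, ?_⟩
    · intro i
      fin_cases i
      · exact strong_of (rowR_arcs hn u.2)
          (pair_subset (L := Lrow u.2) rfl hb.symm) (rowR_end u.2) (rowR_reach u.2)
      · exact strong_of (rowL_arcs hn u.2)
          (pair_subset (L := Lrow u.2) rfl hb.symm) (rowL_end u.2) (rowL_reach u.2)
      · exact strong3 (colU_arcs hm u.1) (rowR_arcs hn r') (colD_arcs hm v.1)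
          (colU_end u.1) (rowR_end r') (colD_end v.1)
          (colU_reach u.1) (rowR_reach r') (colD_reach v.1)
          (p := (u.1, r')) (q := (v.1, r')) rfl rfl rfl rfl
          (pair_subset (L := (Lcol u.1 ∪ Lrow r') ∪ Lcol v.1)
            (Or.inl (Or.inl rfl)) (Or.inr rfl))
      · exact strong3 (colD_arcs hm u.1) (rowL_arcs hn r') (colU_arcs hm v.1)
          (colD_end u.1) (rowL_end r') (colU_end v.1)
          (colD_reach u.1) (rowL_reach r') (colU_reach v.1)
          (p := (u.1, r')) (q := (v.1, r')) rfl rfl rfl rfl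
          (pair_subset (L := (Lcol u.1 ∪ Lrow r') ∪ Lcol v.1)
            (Or.inl (Or.inl rfl)) (Or.inr rfl))
    · have d01 : Disjoint (rowR (n := n) u.2) (rowL (n := n) u.2) := disj_rowR_rowL hn _ _
      have d02 : Disjoint (rowR (n := n) u.2)
          ((colU u.1 ∪ rowR r') ∪ colD v.1) := by
        refine Set.disjoint_union_right.mpr
          ⟨Set.disjoint_union_right.mpr ⟨?_, ?_⟩, ?_⟩
        exacts [disj_rowR_colU hn _ _, disj_rowR_rowR hrne, disj_rowR_colD hn _ _]
      have d03 : Disjoint (rowR (n := n) u.2)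
          ((colD u.1 ∪ rowL r') ∪ colU v.1) := by
        refine Set.disjoint_union_right.mpr
          ⟨Set.disjoint_union_right.mpr ⟨?_, ?_⟩, ?_⟩
        exacts [disj_rowR_colD hn _ _, disj_rowR_rowL hn _ _, disj_rowR_colU hn _ _]
      have d12 : Disjoint (rowL (n := n) u.2)
          ((colU u.1 ∪ rowR r') ∪ colD v.1) := by
        refine Set.disjoint_union_right.mpr
          ⟨Set.disjoint_union_right.mpr ⟨?_, ?_⟩, ?_⟩
        exacts [disj_rowL_colU hn _ _, (disj_rowR_rowL hn _ _).symm, disj_rowL_colD hn _ _]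
      have d13 : Disjoint (rowL (n := n) u.2)
          ((colD u.1 ∪ rowL r') ∪ colU v.1) := by
        refine Set.disjoint_union_right.mpr
          ⟨Set.disjoint_union_right.mpr ⟨?_, ?_⟩, ?_⟩
        exacts [disj_rowL_colD hn _ _, disj_rowL_rowL hrne, disj_rowL_colU hn _ _]
      have d23 : Disjoint ((colU (m := m) u.1 ∪ rowR r') ∪ colD v.1)
          ((colD u.1 ∪ rowL r') ∪ colU v.1) := by
        refine Set.disjoint_union_left.mpr
          ⟨Set.disjoint_union_left.mpr ⟨?_, ?_⟩, ?_⟩ <;>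
          refine Set.disjoint_union_right.mpr
            ⟨Set.disjoint_union_right.mpr ⟨?_, ?_⟩, ?_⟩
        exacts [disj_colU_colD hm _ _, (disj_rowL_colU hn _ _).symm, disj_colU_colU ha,
          disj_rowR_colD hn _ _, disj_rowR_rowL hn _ _, disj_rowR_colU hn _ _,
          disj_colD_colD (Ne.symm ha), (disj_rowL_colD hn _ _).symm,
          (disj_colU_colD hm _ _).symm]
      intro i j hij
      fin_cases i <;> fin_cases j <;>
        first
          | exact absurd rfl hij
          | exact d01 | exact d01.symm | exact d02 | exact d02.symm
          | exact d03 | exact d03.symm | exact d12 | exact d12.symm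
          | exact d13 | exact d13.symm | exact d23 | exact d23.symm
  · by_cases ha : u.1 = v.1
    · -- same column
      set c' : Fin n := u.1 + 1 with hc'
      have hcne : u.1 ≠ c' := (add_one_ne hn u.1).symm
      refine ⟨![colU u.1, colD u.1,
          (rowR u.2 ∪ colU c') ∪ rowL v.2,
          (rowL u.2 ∪ colD c') ∪ rowR v.2], ?_, ?_⟩
      · intro i
        fin_cases i
        · exact strong_of (colU_arcs hm u.1)
            (pair_subset (L := Lcol u.1) rfl ha.symm) (colU_end u.1) (colU_reach u.1)
        · exact strong_of (colD_arcs hm u.1)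
            (pair_subset (L := Lcol u.1) rfl ha.symm) (colD_end u.1) (colD_reach u.1)
        · exact strong3 (rowR_arcs hn u.2) (colU_arcs hm c') (rowL_arcs hn v.2)
            (rowR_end u.2) (colU_end c') (rowL_end v.2)
            (rowR_reach u.2) (colU_reach c') (rowL_reach v.2)
            (p := (c', u.2)) (q := (c', v.2)) rfl rfl rfl rfl
            (pair_subset (L := (Lrow u.2 ∪ Lcol c') ∪ Lrow v.2)
              (Or.inl (Or.inl rfl)) (Or.inr rfl))
        · exact strong3 (rowL_arcs hn u.2) (colD_arcs hm c') (rowR_arcs hn v.2)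
            (rowL_end u.2) (colD_end c') (rowR_end v.2)
            (rowL_reach u.2) (colD_reach c') (rowR_reach v.2)
            (p := (c', u.2)) (q := (c', v.2)) rfl rfl rfl rfl
            (pair_subset (L := (Lrow u.2 ∪ Lcol c') ∪ Lrow v.2)
              (Or.inl (Or.inl rfl)) (Or.inr rfl))
      · have d01 : Disjoint (colU (m := m) u.1) (colD (m := m) u.1) := disj_colU_colD hm _ _
        have d02 : Disjoint (colU (m := m) u.1)
            ((rowR u.2 ∪ colU c') ∪ rowL v.2) := by
          refine Set.disjoint_union_right.mpr
            ⟨Set.disjoint_union_right.mpr ⟨?_, ?_⟩, ?_⟩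
          exacts [(disj_rowR_colU hn _ _).symm, disj_colU_colU hcne,
            (disj_rowL_colU hn _ _).symm]
        have d03 : Disjoint (colU (m := m) u.1)
            ((rowL u.2 ∪ colD c') ∪ rowR v.2) := by
          refine Set.disjoint_union_right.mpr
            ⟨Set.disjoint_union_right.mpr ⟨?_, ?_⟩, ?_⟩
          exacts [(disj_rowL_colU hn _ _).symm, disj_colU_colD hm _ _,
            (disj_rowR_colU hn _ _).symm]
        have d12 : Disjoint (colD (m := m) u.1)
            ((rowR u.2 ∪ colU c') ∪ rowL v.2) := by
          refine Set.disjoint_union_right.mpr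
            ⟨Set.disjoint_union_right.mpr ⟨?_, ?_⟩, ?_⟩
          exacts [(disj_rowR_colD hn _ _).symm, (disj_colU_colD hm _ _).symm,
            (disj_rowL_colD hn _ _).symm]
        have d13 : Disjoint (colD (m := m) u.1)
            ((rowL u.2 ∪ colD c') ∪ rowR v.2) := by
          refine Set.disjoint_union_right.mpr
            ⟨Set.disjoint_union_right.mpr ⟨?_, ?_⟩, ?_⟩
          exacts [(disj_rowL_colD hn _ _).symm, disj_colD_colD hcne,
            (disj_rowR_colD hn _ _).symm]
        have d23 : Disjoint ((rowR (n := n) u.2 ∪ colU c') ∪ rowL v.2)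
            ((rowL u.2 ∪ colD c') ∪ rowR v.2) := by
          refine Set.disjoint_union_left.mpr
            ⟨Set.disjoint_union_left.mpr ⟨?_, ?_⟩, ?_⟩ <;>
            refine Set.disjoint_union_right.mpr
              ⟨Set.disjoint_union_right.mpr ⟨?_, ?_⟩, ?_⟩
          exacts [disj_rowR_rowL hn _ _, disj_rowR_colD hn _ _, disj_rowR_rowR hb,
            (disj_rowL_colU hn _ _).symm, disj_colU_colD hm _ _,
            (disj_rowR_colU hn _ _).symm,
            disj_rowL_rowL (Ne.symm hb), disj_rowL_colD hn _ _,
            (disj_rowR_rowL hn _ _).symm]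
        intro i j hij
        fin_cases i <;> fin_cases j <;>
          first
            | exact absurd rfl hij
            | exact d01 | exact d01.symm | exact d02 | exact d02.symm
            | exact d03 | exact d03.symm | exact d12 | exact d12.symm
            | exact d13 | exact d13.symm | exact d23 | exact d23.symm
    · -- general position
      refine ⟨![rowR u.2 ∪ colU v.1, rowL u.2 ∪ colD v.1,
          rowR v.2 ∪ colU u.1, rowL v.2 ∪ colD u.1], ?_, ?_⟩
      · intro i
        fin_cases i
        · exact strong2 (rowR_arcs hn u.2) (colU_arcs hm v.1)
            (rowR_end u.2) (colU_end v.1) (rowR_reach u.2) (colU_reach v.1)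
            (p := (v.1, u.2)) rfl rfl
            (pair_subset (L := Lrow u.2 ∪ Lcol v.1) (Or.inl rfl) (Or.inr rfl))
        · exact strong2 (rowL_arcs hn u.2) (colD_arcs hm v.1)
            (rowL_end u.2) (colD_end v.1) (rowL_reach u.2) (colD_reach v.1)
            (p := (v.1, u.2)) rfl rfl
            (pair_subset (L := Lrow u.2 ∪ Lcol v.1) (Or.inl rfl) (Or.inr rfl))
        · exact strong2 (rowR_arcs hn v.2) (colU_arcs hm u.1)
            (rowR_end v.2) (colU_end u.1) (rowR_reach v.2) (colU_reach u.1)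
            (p := (u.1, v.2)) rfl rfl
            (pair_subset (L := Lrow v.2 ∪ Lcol u.1) (Or.inr rfl) (Or.inl rfl))
        · exact strong2 (rowL_arcs hn v.2) (colD_arcs hm u.1)
            (rowL_end v.2) (colD_end u.1) (rowL_reach v.2) (colD_reach u.1)
            (p := (u.1, v.2)) rfl rfl
            (pair_subset (L := Lrow v.2 ∪ Lcol u.1) (Or.inr rfl) (Or.inl rfl))
      · have d01 : Disjoint (rowR (n := n) u.2 ∪ colU v.1) (rowL u.2 ∪ colD v.1) := by
          refine Set.disjoint_union_left.mpr ⟨?_, ?_⟩ <;>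
            refine Set.disjoint_union_right.mpr ⟨?_, ?_⟩
          exacts [disj_rowR_rowL hn _ _, disj_rowR_colD hn _ _,
            (disj_rowL_colU hn _ _).symm, disj_colU_colD hm _ _]
        have d02 : Disjoint (rowR (n := n) u.2 ∪ colU v.1) (rowR v.2 ∪ colU u.1) := by
          refine Set.disjoint_union_left.mpr ⟨?_, ?_⟩ <;>
            refine Set.disjoint_union_right.mpr ⟨?_, ?_⟩
          exacts [disj_rowR_rowR hb, disj_rowR_colU hn _ _,
            (disj_rowR_colU hn _ _).symm, disj_colU_colU (Ne.symm ha)]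
        have d03 : Disjoint (rowR (n := n) u.2 ∪ colU v.1) (rowL v.2 ∪ colD u.1) := by
          refine Set.disjoint_union_left.mpr ⟨?_, ?_⟩ <;>
            refine Set.disjoint_union_right.mpr ⟨?_, ?_⟩
          exacts [disj_rowR_rowL hn _ _, disj_rowR_colD hn _ _,
            (disj_rowL_colU hn _ _).symm, disj_colU_colD hm _ _]
        have d12 : Disjoint (rowL (n := n) u.2 ∪ colD v.1) (rowR v.2 ∪ colU u.1) := by
          refine Set.disjoint_union_left.mpr ⟨?_, ?_⟩ <;>
            refine Set.disjoint_union_right.mpr ⟨?_, ?_⟩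
          exacts [(disj_rowR_rowL hn _ _).symm, disj_rowL_colU hn _ _,
            (disj_rowR_colD hn _ _).symm, (disj_colU_colD hm _ _).symm]
        have d13 : Disjoint (rowL (n := n) u.2 ∪ colD v.1) (rowL v.2 ∪ colD u.1) := by
          refine Set.disjoint_union_left.mpr ⟨?_, ?_⟩ <;>
            refine Set.disjoint_union_right.mpr ⟨?_, ?_⟩
          exacts [disj_rowL_rowL hb, disj_rowL_colD hn _ _,
            (disj_rowL_colD hn _ _).symm, disj_colD_colD (Ne.symm ha)]
        have d23 : Disjoint (rowR (n := n) v.2 ∪ colU u.1) (rowL v.2 ∪ colD u.1) := by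
          refine Set.disjoint_union_left.mpr ⟨?_, ?_⟩ <;>
            refine Set.disjoint_union_right.mpr ⟨?_, ?_⟩
          exacts [disj_rowR_rowL hn _ _, disj_rowR_colD hn _ _,
            (disj_rowL_colU hn _ _).symm, disj_colU_colD hm _ _]
        intro i j hij
        fin_cases i <;> fin_cases j <;>
          first
            | exact absurd rfl hij
            | exact d01 | exact d01.symm | exact d02 | exact d02.symm
            | exact d03 | exact d03.symm | exact d12 | exact d12.symm
            | exact d13 | exact d13.symm | exact d23 | exact d23.symm

lemma le_four (hn : 3 ≤ n) (hm : 3 ≤ m) (u v : Fin n × Fin m) (huv : u ≠ v) (k : ℕ)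
    (f : Fin k → Set ((Fin n × Fin m) × (Fin n × Fin m)))
    (hstr : ∀ i, (D2 n m).IsStrongSubgraphOn {u, v} (f i))
    (hdisj : ∀ i j, i ≠ j → Disjoint (f i) (f j)) : k ≤ 4 := by
  have hx : ∀ i : Fin k, ∃ x, (u, x) ∈ f i := by
    intro i
    have hreach := (hstr i).2 u (Or.inl (Or.inl rfl)) v (Or.inl (Or.inr rfl))
    rcases hreach.cases_head with h | ⟨c, hc, _⟩
    · exact absurd h huv
    · exact ⟨c, hc⟩
  choose g hg using hx
  classical
  set N : Finset (Fin n × Fin m) :=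
    {(u.1 + 1, u.2), (u.1 - 1, u.2), (u.1, u.2 + 1), (u.1, u.2 - 1)} with hN
  have hmem : ∀ i, g i ∈ N := by
    intro i
    have hadj : (D2 n m).Adj u (g i) := (hstr i).1 (hg i)
    rcases hadj with ⟨hadj1, heq⟩ | ⟨heq, hadj2⟩
    · rcases hadj1 with h | h
      · have h1 : (g i).1 = u.1 + 1 := Fin.ext (by rw [val_add_one hn]; exact h)
        have h2 : g i = (u.1 + 1, u.2) := Prod.ext h1 heq.symm
        simp [hN, h2]
      · have h1 : u.1 = (g i).1 + 1 := Fin.ext (by rw [val_add_one hn]; exact h)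
        have h1' : (g i).1 = u.1 - 1 := by rw [h1]; ring
        have h2 : g i = (u.1 - 1, u.2) := Prod.ext h1' heq.symm
        simp [hN, h2]
    · rcases hadj2 with h | h
      · have h1 : (g i).2 = u.2 + 1 := Fin.ext (by rw [val_add_one hm]; exact h)
        have h2 : g i = (u.1, u.2 + 1) := Prod.ext heq.symm h1
        simp [hN, h2]
      · have h1 : u.2 = (g i).2 + 1 := Fin.ext (by rw [val_add_one hm]; exact h)
        have h1' : (g i).2 = u.2 - 1 := by rw [h1]; ring
        have h2 : g i = (u.1, u.2 - 1) := Prod.ext heq.symm h1'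
        simp [hN, h2]
  have hinj : Function.Injective g := by
    intro i j hij
    by_contra hne
    have h1 := hg i
    have h2 := hg j
    rw [← hij] at h2
    exact Set.disjoint_left.mp (hdisj i j hne) h1 h2
  have hcard : k ≤ N.card := by
    have := Finset.card_le_card_of_injOn (s := (Finset.univ : Finset (Fin k))) (t := N)
      g (fun a _ => hmem a) hinj.injOn
    simpa using this
  have hN4 : N.card ≤ 4 := by
    have a1 := Finset.card_insert_le (α := Fin n × Fin m) (u.1 + 1, u.2)
      {(u.1 - 1, u.2), (u.1, u.2 + 1), (u.1, u.2 - 1)}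
    have a2 := Finset.card_insert_le (α := Fin n × Fin m) (u.1 - 1, u.2)
      {(u.1, u.2 + 1), (u.1, u.2 - 1)}
    have a3 := Finset.card_insert_le (α := Fin n × Fin m) (u.1, u.2 + 1)
      {(u.1, u.2 - 1)}
    have a4 : ({(u.1, u.2 - 1)} : Finset (Fin n × Fin m)).card = 1 :=
      Finset.card_singleton _
    rw [hN]
    omega
  omega

lemma lambdaS_eq_four (hn : 3 ≤ n) (hm : 3 ≤ m) (S : Set (Fin n × Fin m))
    (hS : S.ncard = 2) : (D2 n m).lambdaS S = 4 := by
  obtain ⟨u, v, huv, rfl⟩ := Set.ncard_eq_two.mp hS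
  unfold Digraph.lambdaS
  apply le_antisymm
  · apply csSup_le
    · exact ⟨0, Fin.elim0, fun i => i.elim0, fun i => i.elim0⟩
    · rintro k ⟨f, h1, h2⟩
      exact le_four hn hm u v huv k f h1 h2
  · obtain ⟨f, h1, h2⟩ := lambdaS_four hn hm u v huv
    apply le_csSup
    · refine ⟨4, ?_⟩
      rintro k ⟨f', h1', h2'⟩
      exact le_four hn hm u v huv k f' h1' h2'
    · exact ⟨f, h1, h2⟩

end
end Stmt18

theorem stmt18 (n m : ℕ) (hn : 3 ≤ n) (hm : 3 ≤ m) :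
    ((biCycle n).cartProd (biCycle m)).lambdaK 2 = 4 := by
  haveI : NeZero n := ⟨by omega⟩
  haveI : NeZero m := ⟨by omega⟩
  have hset : {t | ∃ S : Set (Fin n × Fin m), S.ncard = 2 ∧
      ((biCycle n).cartProd (biCycle m)).lambdaS S = t} = {4} := by
    ext t
    constructor
    · rintro ⟨S, hS2, rfl⟩
      exact Stmt18.lambdaS_eq_four hn hm S hS2
    · rintro rfl
      have hne : ((0 : Fin n), (0 : Fin m)) ≠ ((1 : Fin n), (0 : Fin m)) := by
        intro h
        have h1 := congrArg (fun p => (Prod.fst p : Fin n).val) h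
        simp only [Fin.val_zero] at h1
        rw [Fin.val_one', Nat.mod_eq_of_lt (by omega)] at h1
        exact absurd h1 (by norm_num)
      exact ⟨{((0 : Fin n), (0 : Fin m)), ((1 : Fin n), (0 : Fin m))}, Set.ncard_pair hne,
        Stmt18.lambdaS_eq_four hn hm _ (Set.ncard_pair hne)⟩
  unfold Digraph.lambdaK
  rw [hset]
  exact csInf_singleton 4
end

section
/- For trees T_n and T_m with n, m ≥ 2 vertices, λ_2(↔T_n □ ↔T_m) = 2, where ↔T denotes the complete biorientation of a tree T. -/
def pathArcs {α : Type*} (l : List α) : Set (α × α) :=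
  {p | ∃ (i : ℕ) (h : i + 1 < l.length), p = (l[i]'(by omega), l[i+1]'h)}

lemma mem_pathArcs_fst {α : Type*} {l : List α} {p : α × α} (h : p ∈ pathArcs l) : p.1 ∈ l := by
  obtain ⟨i, hi, rfl⟩ := h; exact List.getElem_mem _

lemma mem_pathArcs_snd {α : Type*} {l : List α} {p : α × α} (h : p ∈ pathArcs l) : p.2 ∈ l := by
  obtain ⟨i, hi, rfl⟩ := h; exact List.getElem_mem _

lemma pathArcs_map {α β : Type*} (f : α → β) (l : List α) {p : β × β} :
    p ∈ pathArcs (l.map f) ↔ ∃ q ∈ pathArcs l, p = (f q.1, f q.2) := by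
  constructor
  · rintro ⟨i, hi, rfl⟩
    rw [List.length_map] at hi
    exact ⟨(l[i]'(by omega), l[i+1]'hi), ⟨i, hi, rfl⟩, by simp⟩
  · rintro ⟨⟨x, y⟩, ⟨i, hi, h⟩, rfl⟩
    refine ⟨i, by simpa using hi, ?_⟩
    obtain ⟨rfl, rfl⟩ := Prod.mk.injEq .. ▸ h
    simp_all

lemma pathArcs_reverse {α : Type*} {l : List α} {p : α × α} :
    p ∈ pathArcs l.reverse ↔ (p.2, p.1) ∈ pathArcs l := by
  have key : ∀ (m : List α) (q : α × α), q ∈ pathArcs m.reverse → (q.2, q.1) ∈ pathArcs m := by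
    rintro m q ⟨i, hi, rfl⟩
    have hlen : i + 1 < m.length := by simpa using hi
    refine ⟨m.length - 1 - (i+1), by omega, ?_⟩
    simp only [List.getElem_reverse]
    congr 2 <;> omega
  constructor
  · exact key l p
  · intro h
    have := key l.reverse (p.2, p.1) (by simpa using h)
    simpa using this

lemma pathArcs_ne {α : Type*} {l : List α} (h : l.Nodup) {x y : α}
    (hxy : (x, y) ∈ pathArcs l) : x ≠ y := by
  obtain ⟨i, hi, he⟩ := hxy
  obtain ⟨h1, h2⟩ := Prod.mk.injEq .. ▸ he
  subst h1; subst h2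
  intro hc
  have := (h.getElem_inj_iff (hi := by omega) (hj := hi)).1 hc
  omega

lemma pathArcs_asymm {α : Type*} {l : List α} (h : l.Nodup) {x y : α}
    (hxy : (x, y) ∈ pathArcs l) : (y, x) ∉ pathArcs l := by
  obtain ⟨i, hi, he⟩ := hxy
  obtain ⟨h1, h2⟩ := Prod.mk.injEq .. ▸ he
  subst h1; subst h2
  rintro ⟨j, hj, hej⟩
  obtain ⟨h3, h4⟩ := Prod.mk.injEq .. ▸ hej
  have e1 : i + 1 = j := (h.getElem_inj_iff (hi := by omega) (hj := by omega)).1 h3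
  have e2 : i = j + 1 := (h.getElem_inj_iff (hi := by omega) (hj := by omega)).1 h4
  omega

lemma pathArcs_adj {α : Type*} {r : α → α → Prop} {l : List α} (h : l.Chain' r)
    {pr : α × α} (hpr : pr ∈ pathArcs l) : r pr.1 pr.2 := by
  obtain ⟨i, hi, rfl⟩ := hpr
  have := List.isChain_iff_getElem.1 h i (by omega)
  simpa [List.get_eq_getElem] using this

lemma reach_of_pathArcs {α : Type*} {B : Set (α × α)} {l : List α} (hB : pathArcs l ⊆ B)
    (i j : ℕ) (hij : i ≤ j) (hj : j < l.length) :
    Relation.ReflTransGen (fun a b => (a, b) ∈ B) (l[i]'(by omega)) (l[j]'hj) := by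
  induction j, hij using Nat.le_induction with
  | base => exact .refl
  | succ j hij ih => exact .tail (ih (by omega)) (hB ⟨j, hj, rfl⟩)

lemma reach_getLast {α : Type*} {B : Set (α × α)} {l : List α} (hB : pathArcs l ⊆ B)
    {x : α} (hx : x ∈ l) (h : l ≠ []) :
    Relation.ReflTransGen (fun a b => (a, b) ∈ B) x (l.getLast h) := by
  obtain ⟨i, hi, rfl⟩ := List.mem_iff_getElem.1 hx
  rw [List.getLast_eq_getElem]
  exact reach_of_pathArcs hB i (l.length - 1) (by omega) (by omega)

lemma head_reach {α : Type*} {B : Set (α × α)} {l : List α} (hB : pathArcs l ⊆ B)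
    {x : α} (hx : x ∈ l) (h : l ≠ []) :
    Relation.ReflTransGen (fun a b => (a, b) ∈ B) (l.head h) x := by
  obtain ⟨i, hi, rfl⟩ := List.mem_iff_getElem.1 hx
  rw [List.head_eq_getElem]
  exact reach_of_pathArcs hB 0 i (by omega) hi

lemma cycle4_reach {α : Type*} {B : Set (α × α)} {L1 L2 L3 L4 : List α}
    (h1 : L1 ≠ []) (h2 : L2 ≠ []) (h3 : L3 ≠ []) (h4 : L4 ≠ [])
    (hB1 : pathArcs L1 ⊆ B) (hB2 : pathArcs L2 ⊆ B) (hB3 : pathArcs L3 ⊆ B)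
    (hB4 : pathArcs L4 ⊆ B)
    (e12 : L1.getLast h1 = L2.head h2) (e23 : L2.getLast h2 = L3.head h3)
    (e34 : L3.getLast h3 = L4.head h4) (e41 : L4.getLast h4 = L1.head h1) :
    ∀ x, (x ∈ L1 ∨ x ∈ L2 ∨ x ∈ L3 ∨ x ∈ L4) →
    ∀ y, (y ∈ L1 ∨ y ∈ L2 ∨ y ∈ L3 ∨ y ∈ L4) →
    Relation.ReflTransGen (fun a b => (a, b) ∈ B) x y := by
  set r := fun a b => (a, b) ∈ B with hr
  have r1 : Relation.ReflTransGen r (L1.head h1) (L2.head h2) := by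
    rw [← e12]; exact reach_getLast hB1 (L1.head_mem h1) h1
  have r2 : Relation.ReflTransGen r (L2.head h2) (L3.head h3) := by
    rw [← e23]; exact reach_getLast hB2 (L2.head_mem h2) h2
  have r3 : Relation.ReflTransGen r (L3.head h3) (L4.head h4) := by
    rw [← e34]; exact reach_getLast hB3 (L3.head_mem h3) h3
  have r4 : Relation.ReflTransGen r (L4.head h4) (L1.head h1) := by
    rw [← e41]; exact reach_getLast hB4 (L4.head_mem h4) h4
  intro x hx y hy
  have toH1 : Relation.ReflTransGen r x (L1.head h1) := by
    rcases hx with hx | hx | hx | hx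
    · exact ((reach_getLast hB1 hx h1).trans (e12 ▸ (r2.trans (r3.trans r4))))
    · exact ((reach_getLast hB2 hx h2).trans (e23 ▸ (r3.trans r4)))
    · exact ((reach_getLast hB3 hx h3).trans (e34 ▸ r4))
    · exact ((reach_getLast hB4 hx h4).trans (e41 ▸ .refl))
  have fromH1 : Relation.ReflTransGen r (L1.head h1) y := by
    rcases hy with hy | hy | hy | hy
    · exact head_reach hB1 hy h1
    · exact r1.trans (head_reach hB2 hy h2)
    · exact (r1.trans r2).trans (head_reach hB3 hy h3)
    · exact ((r1.trans r2).trans r3).trans (head_reach hB4 hy h4)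
  exact toH1.trans fromH1



open SimpleGraph in
lemma exists_adj' {V : Type*} [Fintype V] (G : SimpleGraph V) (hc : G.Connected)
    (hcard : 2 ≤ Fintype.card V) (v : V) : ∃ n, G.Adj v n := by
  obtain ⟨z, hz⟩ := Fintype.exists_ne_of_one_lt_card (by omega) v
  obtain ⟨w⟩ := hc.preconnected v z
  cases w with
  | nil => exact absurd rfl hz
  | cons h p => exact ⟨_, h⟩

open SimpleGraph in
lemma exists_pathList {V : Type*} [Fintype V] (G : SimpleGraph V) (hc : G.Connected)
    (hcard : 2 ≤ Fintype.card V) (x y : V) :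
    ∃ (l : List V) (h : l ≠ []), l.Chain' G.Adj ∧ l.Nodup ∧ l.head h = x ∧
      (l.getLast h = y ∨ y = x) ∧ l.head h ≠ l.getLast h := by
  classical
  by_cases hxy : x = y
  · obtain ⟨c, hadj⟩ := exists_adj' G hc hcard x
    have hne : x ≠ c := G.ne_of_adj hadj
    exact ⟨[x, c], by simp, by simp [List.Chain', hadj], by simp [hne], rfl, Or.inr hxy.symm, by simp [hne]⟩
  · obtain ⟨w⟩ := hc.preconnected x y
    refine ⟨w.toPath.1.support, Walk.support_ne_nil _, Walk.isChain_adj_support _,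
      w.toPath.2.support_nodup, Walk.head_support _, Or.inl (Walk.getLast_support _), ?_⟩
    rw [show (w.toPath.1.support.head (Walk.support_ne_nil _)) = x from Walk.head_support _,
      show (w.toPath.1.support.getLast (Walk.support_ne_nil _)) = y from Walk.getLast_support _]
    exact hxy

open SimpleGraph in
lemma exists_leaf {V : Type*} [Fintype V] (G : SimpleGraph V) (hT : G.IsTree)
    (hcard : 2 ≤ Fintype.card V) : ∃ v n, G.Adj v n ∧ ∀ m, G.Adj v m → m = n := by
  classical
  by_contra hcon
  push_neg at hcon
  have hdeg : ∀ v, 2 ≤ G.degree v := by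
    intro v
    obtain ⟨n, hn⟩ := exists_adj' G hT.isConnected hcard v
    obtain ⟨m, hm, hmn⟩ := hcon v n hn
    exact Finset.one_lt_card.2 ⟨m, by simpa using hm, n, by simpa using hn, hmn⟩
  have hsum := G.sum_degrees_eq_twice_card_edges
  have hcd := hT.card_edgeFinset
  have hle : 2 * Fintype.card V ≤ ∑ v, G.degree v := by
    calc 2 * Fintype.card V = ∑ _v : V, 2 := by simp [mul_comm]
    _ ≤ _ := Finset.sum_le_sum (fun v _ => hdeg v)
  omega

lemma two_disjoint {V W : Type*} [Fintype V] [Fintype W]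
    (T₁ : SimpleGraph V) (T₂ : SimpleGraph W)
    (h₁c : T₁.Connected) (h₂c : T₂.Connected)
    (hn : 2 ≤ Fintype.card V) (hm : 2 ≤ Fintype.card W)
    (a b : V × W) :
    ∃ B1 B2 : Set ((V × W) × (V × W)),
      (T₁.biorient.cartProd T₂.biorient).IsStrongSubgraphOn {a, b} B1 ∧
      (T₁.biorient.cartProd T₂.biorient).IsStrongSubgraphOn {a, b} B2 ∧
      Disjoint B1 B2 := by
  obtain ⟨p, hpne, hpc, hpnd, hph, hpl, hpd⟩ := exists_pathList T₁ h₁c hn a.1 b.1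
  obtain ⟨q, hqne, hqc, hqnd, hqh, hql, hqd⟩ := exists_pathList T₂ h₂c hm a.2 b.2
  set D := T₁.biorient.cartProd T₂.biorient with hD
  set u1 := p.head hpne with hu1
  set v1 := p.getLast hpne with hv1
  set u2 := q.head hqne with hu2
  set v2 := q.getLast hqne with hv2
  have hDadj1 : ∀ {t t' : V} (s : W), T₁.Adj t t' → D.Adj (t, s) (t', s) := by
    intro t t' s h; exact Or.inl ⟨h, rfl⟩
  have hDadj2 : ∀ (t : V) {s s' : W}, T₂.Adj s s' → D.Adj (t, s) (t, s') := by
    intro t s s' h; exact Or.inr ⟨rfl, h⟩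
  have hDsymm : ∀ x y : V × W, D.Adj x y → D.Adj y x := by
    rintro x y (⟨h, e⟩ | ⟨e, h⟩)
    · exact Or.inl ⟨h.symm, e.symm⟩
    · exact Or.inr ⟨e.symm, h.symm⟩
  set S1 := p.map (fun t => (t, u2)) with hS1def
  set S2 := q.map (fun s => (v1, s)) with hS2def
  set S3 := p.reverse.map (fun t => (t, v2)) with hS3def
  set S4 := q.reverse.map (fun s => (u1, s)) with hS4def
  have hn1 : S1 ≠ [] := by simp [hS1def, hpne]
  have hn2 : S2 ≠ [] := by simp [hS2def, hqne]
  have hn3 : S3 ≠ [] := by simp [hS3def, hpne]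
  have hn4 : S4 ≠ [] := by simp [hS4def, hqne]
  have hS1h : S1.head hn1 = (u1, u2) := by simp [hS1def, hu1]
  have hS1l : S1.getLast hn1 = (v1, u2) := by simp [hS1def, hv1]
  have hS2h : S2.head hn2 = (v1, u2) := by simp [hS2def, hu2]
  have hS2l : S2.getLast hn2 = (v1, v2) := by simp [hS2def, hv2]
  have hS3h : S3.head hn3 = (v1, v2) := by simp [hS3def, hv1]
  have hS3l : S3.getLast hn3 = (u1, v2) := by simp [hS3def, hu1]
  have hS4h : S4.head hn4 = (u1, v2) := by simp [hS4def, hv2]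
  have hS4l : S4.getLast hn4 = (u1, u2) := by simp [hS4def, hu2]
  have hpcr : p.reverse.Chain' T₁.Adj := List.isChain_reverse.2 (hpc.imp fun _ _ h => h.symm)
  have hqcr : q.reverse.Chain' T₂.Adj := List.isChain_reverse.2 (hqc.imp fun _ _ h => h.symm)
  have hc1 : S1.Chain' D.Adj := (List.isChain_map _).2 (hpc.imp fun _ _ h => hDadj1 _ h)
  have hc2 : S2.Chain' D.Adj := (List.isChain_map _).2 (hqc.imp fun _ _ h => hDadj2 _ h)
  have hc3 : S3.Chain' D.Adj := (List.isChain_map _).2 (hpcr.imp fun _ _ h => hDadj1 _ h)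
  have hc4 : S4.Chain' D.Adj := (List.isChain_map _).2 (hqcr.imp fun _ _ h => hDadj2 _ h)
  have hc1r : S1.reverse.Chain' D.Adj := List.isChain_reverse.2 (hc1.imp fun _ _ h => hDsymm _ _ h)
  have hc2r : S2.reverse.Chain' D.Adj := List.isChain_reverse.2 (hc2.imp fun _ _ h => hDsymm _ _ h)
  have hc3r : S3.reverse.Chain' D.Adj := List.isChain_reverse.2 (hc3.imp fun _ _ h => hDsymm _ _ h)
  have hc4r : S4.reverse.Chain' D.Adj := List.isChain_reverse.2 (hc4.imp fun _ _ h => hDsymm _ _ h)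
  set B1 : Set ((V × W) × (V × W)) :=
    pathArcs S1 ∪ pathArcs S2 ∪ pathArcs S3 ∪ pathArcs S4 with hB1def
  set B2 : Set ((V × W) × (V × W)) :=
    pathArcs S1.reverse ∪ pathArcs S2.reverse ∪ pathArcs S3.reverse ∪ pathArcs S4.reverse
    with hB2def
  have sub1 : pathArcs S1 ⊆ B1 := fun pr h => Or.inl (Or.inl (Or.inl h))
  have sub2 : pathArcs S2 ⊆ B1 := fun pr h => Or.inl (Or.inl (Or.inr h))
  have sub3 : pathArcs S3 ⊆ B1 := fun pr h => Or.inl (Or.inr h)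
  have sub4 : pathArcs S4 ⊆ B1 := fun pr h => Or.inr h
  have sub1' : pathArcs S1.reverse ⊆ B2 := fun pr h => Or.inl (Or.inl (Or.inl h))
  have sub2' : pathArcs S2.reverse ⊆ B2 := fun pr h => Or.inl (Or.inl (Or.inr h))
  have sub3' : pathArcs S3.reverse ⊆ B2 := fun pr h => Or.inl (Or.inr h)
  have sub4' : pathArcs S4.reverse ⊆ B2 := fun pr h => Or.inr h
  -- membership of a and b in the sides
  have hb1 : b.1 ∈ p := by
    rcases hpl with h | h
    · rw [← h]; exact List.getLast_mem hpne
    · rw [h, ← hph]; exact List.head_mem hpne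
  have hb2or : b.2 = u2 ∨ b.2 = v2 := by
    rcases hql with h | h
    · exact Or.inr h.symm
    · exact Or.inl (h.trans hqh.symm)
  have haS1 : a ∈ S1 := by
    have ha' : a = (a.1, u2) := by rw [hqh]
    rw [ha']
    exact List.mem_map_of_mem (by rw [← hph]; exact List.head_mem hpne)
  have hbside : b ∈ S1 ∨ b ∈ S3 := by
    rcases hb2or with h | h
    · left
      have hb' : b = (b.1, u2) := by rw [← h]
      rw [hb']
      exact List.mem_map_of_mem hb1
    · right
      have hb' : b = (b.1, v2) := by rw [← h]
      rw [hb']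
      exact List.mem_map_of_mem (List.mem_reverse.2 hb1)
  have hmem4 : ∀ u ∈ ({a, b} : Set (V × W)) ∪ {v | ∃ e ∈ B1, v = e.1 ∨ v = e.2},
      u ∈ S1 ∨ u ∈ S2 ∨ u ∈ S3 ∨ u ∈ S4 := by
    rintro u (hu | ⟨e, he, hu⟩)
    · rcases hu with rfl | rfl
      · exact Or.inl haS1
      · rcases hbside with h | h
        · exact Or.inl h
        · exact Or.inr (Or.inr (Or.inl h))
    · rcases he with ((h | h) | h) | h <;> rcases hu with rfl | rfl
      · exact Or.inl (mem_pathArcs_fst h)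
      · exact Or.inl (mem_pathArcs_snd h)
      · exact Or.inr (Or.inl (mem_pathArcs_fst h))
      · exact Or.inr (Or.inl (mem_pathArcs_snd h))
      · exact Or.inr (Or.inr (Or.inl (mem_pathArcs_fst h)))
      · exact Or.inr (Or.inr (Or.inl (mem_pathArcs_snd h)))
      · exact Or.inr (Or.inr (Or.inr (mem_pathArcs_fst h)))
      · exact Or.inr (Or.inr (Or.inr (mem_pathArcs_snd h)))
  have hmem4' : ∀ u ∈ ({a, b} : Set (V × W)) ∪ {v | ∃ e ∈ B2, v = e.1 ∨ v = e.2},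
      u ∈ S1 ∨ u ∈ S2 ∨ u ∈ S3 ∨ u ∈ S4 := by
    rintro u (hu | ⟨e, he, hu⟩)
    · exact hmem4 u (Or.inl hu)
    · rcases he with ((h | h) | h) | h <;> rcases hu with rfl | rfl
      · exact Or.inl (List.mem_reverse.1 (mem_pathArcs_fst h))
      · exact Or.inl (List.mem_reverse.1 (mem_pathArcs_snd h))
      · exact Or.inr (Or.inl (List.mem_reverse.1 (mem_pathArcs_fst h)))
      · exact Or.inr (Or.inl (List.mem_reverse.1 (mem_pathArcs_snd h)))
      · exact Or.inr (Or.inr (Or.inl (List.mem_reverse.1 (mem_pathArcs_fst h))))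
      · exact Or.inr (Or.inr (Or.inl (List.mem_reverse.1 (mem_pathArcs_snd h))))
      · exact Or.inr (Or.inr (Or.inr (List.mem_reverse.1 (mem_pathArcs_fst h))))
      · exact Or.inr (Or.inr (Or.inr (List.mem_reverse.1 (mem_pathArcs_snd h))))
  refine ⟨B1, B2, ⟨?_, ?_⟩, ⟨?_, ?_⟩, ?_⟩
  · rintro pr (((h | h) | h) | h)
    · exact pathArcs_adj hc1 h
    · exact pathArcs_adj hc2 h
    · exact pathArcs_adj hc3 h
    · exact pathArcs_adj hc4 h
  · intro u hu w hw
    refine cycle4_reach hn1 hn2 hn3 hn4 sub1 sub2 sub3 sub4 ?_ ?_ ?_ ?_ u (hmem4 u hu)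
      w (hmem4 w hw)
    · rw [hS1l, hS2h]
    · rw [hS2l, hS3h]
    · rw [hS3l, hS4h]
    · rw [hS4l, hS1h]
  · rintro pr (((h | h) | h) | h)
    · exact pathArcs_adj hc1r h
    · exact pathArcs_adj hc2r h
    · exact pathArcs_adj hc3r h
    · exact pathArcs_adj hc4r h
  · intro u hu w hw
    have hr1 : S1.reverse ≠ [] := by simpa using hn1
    have hr2 : S2.reverse ≠ [] := by simpa using hn2
    have hr3 : S3.reverse ≠ [] := by simpa using hn3
    have hr4 : S4.reverse ≠ [] := by simpa using hn4
    have conv : ∀ x, (x ∈ S1 ∨ x ∈ S2 ∨ x ∈ S3 ∨ x ∈ S4) →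
        (x ∈ S2.reverse ∨ x ∈ S1.reverse ∨ x ∈ S4.reverse ∨ x ∈ S3.reverse) := by
      rintro x (h | h | h | h)
      · exact Or.inr (Or.inl (List.mem_reverse.2 h))
      · exact Or.inl (List.mem_reverse.2 h)
      · exact Or.inr (Or.inr (Or.inr (List.mem_reverse.2 h)))
      · exact Or.inr (Or.inr (Or.inl (List.mem_reverse.2 h)))
    refine cycle4_reach hr2 hr1 hr4 hr3 sub2' sub1' sub4' sub3' ?_ ?_ ?_ ?_
      u (conv u (hmem4' u hu)) w (conv w (hmem4' w hw))
    · rw [List.getLast_reverse, List.head_reverse, hS2h, hS1l]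
    · rw [List.getLast_reverse, List.head_reverse, hS1h, hS4l]
    · rw [List.getLast_reverse, List.head_reverse, hS4h, hS3l]
    · rw [List.getLast_reverse, List.head_reverse, hS3h, hS2l]
  · -- disjointness
    rw [Set.disjoint_left]
    rintro ⟨x, y⟩ h1 h2
    have hA1 : ∀ {x y : V × W}, (x, y) ∈ pathArcs S1 →
        x.2 = u2 ∧ y.2 = u2 ∧ (x.1, y.1) ∈ pathArcs p := by
      intro x y h
      obtain ⟨⟨t, t'⟩, hq', heq⟩ := (pathArcs_map _ _).1 h
      obtain ⟨e1, e2⟩ := Prod.mk.injEq .. ▸ heq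
      subst e1; subst e2; exact ⟨rfl, rfl, hq'⟩
    have hA2 : ∀ {x y : V × W}, (x, y) ∈ pathArcs S2 →
        x.1 = v1 ∧ y.1 = v1 ∧ (x.2, y.2) ∈ pathArcs q := by
      intro x y h
      obtain ⟨⟨t, t'⟩, hq', heq⟩ := (pathArcs_map _ _).1 h
      obtain ⟨e1, e2⟩ := Prod.mk.injEq .. ▸ heq
      subst e1; subst e2; exact ⟨rfl, rfl, hq'⟩
    have hA3 : ∀ {x y : V × W}, (x, y) ∈ pathArcs S3 →
        x.2 = v2 ∧ y.2 = v2 ∧ (y.1, x.1) ∈ pathArcs p := by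
      intro x y h
      obtain ⟨⟨t, t'⟩, hq', heq⟩ := (pathArcs_map _ _).1 h
      obtain ⟨e1, e2⟩ := Prod.mk.injEq .. ▸ heq
      subst e1; subst e2
      exact ⟨rfl, rfl, pathArcs_reverse.1 hq'⟩
    have hA4 : ∀ {x y : V × W}, (x, y) ∈ pathArcs S4 →
        x.1 = u1 ∧ y.1 = u1 ∧ (y.2, x.2) ∈ pathArcs q := by
      intro x y h
      obtain ⟨⟨t, t'⟩, hq', heq⟩ := (pathArcs_map _ _).1 h
      obtain ⟨e1, e2⟩ := Prod.mk.injEq .. ▸ heq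
      subst e1; subst e2
      exact ⟨rfl, rfl, pathArcs_reverse.1 hq'⟩
    have h2' : (y, x) ∈ pathArcs S1 ∨ (y, x) ∈ pathArcs S2 ∨ (y, x) ∈ pathArcs S3 ∨
        (y, x) ∈ pathArcs S4 := by
      rcases h2 with ((h | h) | h) | h
      · exact Or.inl (by simpa using pathArcs_reverse.1 h)
      · exact Or.inr (Or.inl (by simpa using pathArcs_reverse.1 h))
      · exact Or.inr (Or.inr (Or.inl (by simpa using pathArcs_reverse.1 h)))
      · exact Or.inr (Or.inr (Or.inr (by simpa using pathArcs_reverse.1 h)))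
    rcases h1 with ((h | h) | h) | h
    · obtain ⟨ex2, ey2, hp1⟩ := hA1 h
      rcases h2' with h' | h' | h' | h'
      · exact pathArcs_asymm hpnd hp1 (hA1 h').2.2
      · obtain ⟨f1, f2, -⟩ := hA2 h'
        exact pathArcs_ne hpnd hp1 (f2.trans f1.symm)
      · exact hqd (ex2.symm.trans (hA3 h').2.1)
      · obtain ⟨f1, f2, -⟩ := hA4 h'
        exact pathArcs_ne hpnd hp1 (f2.trans f1.symm)
    · obtain ⟨ex1, ey1, hq1⟩ := hA2 h
      rcases h2' with h' | h' | h' | h'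
      · obtain ⟨f1, f2, -⟩ := hA1 h'
        exact pathArcs_ne hqnd hq1 (f2.trans f1.symm)
      · exact pathArcs_asymm hqnd hq1 (hA2 h').2.2
      · obtain ⟨f1, f2, -⟩ := hA3 h'
        exact pathArcs_ne hqnd hq1 (f2.trans f1.symm)
      · exact hpd ((hA4 h').2.1.symm.trans ex1)
    · obtain ⟨ex2, ey2, hp1⟩ := hA3 h
      rcases h2' with h' | h' | h' | h'
      · exact hqd ((hA1 h').2.1.symm.trans ex2)
      · obtain ⟨f1, f2, -⟩ := hA2 h'
        exact pathArcs_ne hpnd hp1 (f1.trans f2.symm)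
      · exact pathArcs_asymm hpnd hp1 (hA3 h').2.2
      · obtain ⟨f1, f2, -⟩ := hA4 h'
        exact pathArcs_ne hpnd hp1 (f1.trans f2.symm)
    · obtain ⟨ex1, ey1, hq1⟩ := hA4 h
      rcases h2' with h' | h' | h' | h'
      · obtain ⟨f1, f2, -⟩ := hA1 h'
        exact pathArcs_ne hqnd hq1 (f1.trans f2.symm)
      · exact hpd (ex1.symm.trans (hA2 h').2.1)
      · obtain ⟨f1, f2, -⟩ := hA3 h'
        exact pathArcs_ne hqnd hq1 (f1.trans f2.symm)
      · exact pathArcs_asymm hqnd hq1 (hA4 h').2.2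

lemma exists_out_family {α : Type*} {D : Digraph α} {a b : α} (hab : a ≠ b)
    {k : ℕ} {f : Fin k → Set (α × α)}
    (hf : ∀ i, D.IsStrongSubgraphOn {a, b} (f i))
    (hdisj : ∀ i j, i ≠ j → Disjoint (f i) (f j)) :
    ∃ g : Fin k → α, Function.Injective g ∧ ∀ i, (a, g i) ∈ f i := by
  have hex : ∀ i, ∃ c, (a, c) ∈ f i := by
    intro i
    have hr := (hf i).2 a (Set.mem_union_left _ (Set.mem_insert _ _)) b
      (Set.mem_union_left _ (Set.mem_insert_of_mem _ rfl))
    rcases hr.cases_head with h | ⟨c, hc, -⟩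
    · exact absurd h hab
    · exact ⟨c, hc⟩
  choose g hg using hex
  refine ⟨g, ?_, hg⟩
  intro i j hij
  by_contra hne
  exact Set.disjoint_left.1 (hdisj i j hne) (hg i) (hij ▸ hg j)

lemma lambdaS_ge_two {V W : Type*} [Fintype V] [Fintype W]
    (T₁ : SimpleGraph V) (T₂ : SimpleGraph W)
    (h₁c : T₁.Connected) (h₂c : T₂.Connected)
    (hn : 2 ≤ Fintype.card V) (hm : 2 ≤ Fintype.card W)
    {a b : V × W} (hab : a ≠ b) :
    2 ≤ (T₁.biorient.cartProd T₂.biorient).lambdaS {a, b} := by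
  obtain ⟨B1, B2, hB1, hB2, hdisj⟩ := two_disjoint T₁ T₂ h₁c h₂c hn hm a b
  have hmem : 2 ∈ {k | ∃ f : Fin k → Set ((V × W) × (V × W)),
      (∀ i, (T₁.biorient.cartProd T₂.biorient).IsStrongSubgraphOn {a, b} (f i)) ∧
      ∀ i j, i ≠ j → Disjoint (f i) (f j)} := by
    refine ⟨fun i => if (i : ℕ) = 0 then B1 else B2, ?_, ?_⟩
    · intro i
      dsimp only
      split
      · exact hB1
      · exact hB2
    · intro i j hij
      have hi2 := i.isLt
      have hj2 := j.isLt
      dsimp only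
      split <;> split
      · exact absurd (Fin.ext (by omega)) hij
      · exact hdisj
      · exact hdisj.symm
      · exact absurd (Fin.ext (by omega)) hij
  apply le_csSup ?_ hmem
  refine ⟨Fintype.card (V × W), ?_⟩
  rintro k ⟨f, hf, hd⟩
  obtain ⟨g, hginj, -⟩ := exists_out_family hab hf hd
  simpa using Fintype.card_le_of_injective g hginj

theorem stmt19 {V W : Type*} [Fintype V] [Fintype W]
    (T₁ : SimpleGraph V) (T₂ : SimpleGraph W)
    (h₁ : T₁.IsTree) (h₂ : T₂.IsTree)
    (hn : 2 ≤ Fintype.card V) (hm : 2 ≤ Fintype.card W) :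
    (T₁.biorient.cartProd T₂.biorient).lambdaK 2 = 2 := by
  classical
  obtain ⟨l1, n1, hadj1, huniq1⟩ := exists_leaf T₁ h₁ hn
  obtain ⟨l2, n2, hadj2, huniq2⟩ := exists_leaf T₂ h₂ hm
  set D := T₁.biorient.cartProd T₂.biorient with hD
  set a : V × W := (l1, l2) with ha
  set b : V × W := (n1, l2) with hb
  have hab : a ≠ b := fun h => T₁.ne_of_adj hadj1 (congrArg Prod.fst h)
  have hub : D.lambdaS {a, b} ≤ 2 := by
    have h0 : 0 ∈ {k | ∃ f : Fin k → Set ((V × W) × (V × W)),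
        (∀ i, D.IsStrongSubgraphOn {a, b} (f i)) ∧
        ∀ i j, i ≠ j → Disjoint (f i) (f j)} :=
      ⟨Fin.elim0, fun i => i.elim0, fun i j _ => i.elim0⟩
    apply csSup_le ⟨0, h0⟩
    rintro k ⟨f, hf, hd⟩
    obtain ⟨g, hginj, hg⟩ := exists_out_family hab hf hd
    have hgmem : ∀ i, g i ∈ ({(n1, l2), (l1, n2)} : Finset (V × W)) := by
      intro i
      have hadj : D.Adj a (g i) := (hf i).1 (hg i)
      rcases hadj with ⟨h, e⟩ | ⟨e, h⟩
      · have h1 := huniq1 _ h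
        have : g i = (n1, l2) := Prod.ext h1 e.symm
        simp [this]
      · have h2 := huniq2 _ h
        have : g i = (l1, n2) := Prod.ext e.symm h2
        simp [this]
    calc k = Fintype.card (Fin k) := (Fintype.card_fin k).symm
    _ ≤ Fintype.card ({(n1, l2), (l1, n2)} : Finset (V × W)) :=
        Fintype.card_le_of_injective (fun i => ⟨g i, hgmem i⟩)
          (fun i j h => hginj (congrArg Subtype.val h))
    _ = ({(n1, l2), (l1, n2)} : Finset (V × W)).card := Fintype.card_coe _
    _ ≤ 2 := (Finset.card_insert_le _ _).trans (by simp)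
  have hlb : ∀ S : Set (V × W), S.ncard = 2 → 2 ≤ D.lambdaS S := by
    intro S hS
    obtain ⟨x, y, hxy, rfl⟩ := Set.ncard_eq_two.1 hS
    exact lambdaS_ge_two T₁ T₂ h₁.isConnected h₂.isConnected hn hm hxy
  have heq : D.lambdaS {a, b} = 2 := le_antisymm hub (hlb _ (Set.ncard_pair hab))
  unfold Digraph.lambdaK
  apply le_antisymm
  · exact Nat.sInf_le ⟨{a, b}, Set.ncard_pair hab, heq⟩
  · have hmem2 : 2 ∈ {m | ∃ S : Set (V × W), S.ncard = 2 ∧ D.lambdaS S = m} :=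
      ⟨{a, b}, Set.ncard_pair hab, heq⟩
    apply le_csInf ⟨2, hmem2⟩
    rintro m ⟨S, hS, rfl⟩
    exact hlb S hS
end
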